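/- Let G be a finite bipartite graph with m edges. Then the largest eigenvalue of the adjacency matrix of G satisfies λ1(G) ≤ √m. -/

import Mathlib

open MeasureTheory Filter Asymptotics

noncomputable section

/-- The `n`-dimensional cube graph `Q^n`: vertices are vectors in `{0,1}^n`,
two vertices adjacent iff they differ in exactly one coordinate. -/
def cubeGraph (n : ℕ) : SimpleGraph (Fin n → Bool) where
  Adj x y := hammingDist x y = 1
  symm := ⟨fun x y h => by show hammingDist y x = 1; rwa [hammingDist_comm]⟩
  loopless := ⟨fun x h => by simp [hammingDist_self] at h⟩

/-- The subgraph of the `n`-cube determined by a configuration `ω` of edge indicators: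
an edge of `Q^n` is kept iff its indicator is `true`. -/
def randCube (n : ℕ) (ω : Sym2 (Fin n → Bool) → Bool) : SimpleGraph (Fin n → Bool) where
  Adj x y := (cubeGraph n).Adj x y ∧ ω s(x, y) = true
  symm := ⟨fun x y h => ⟨(cubeGraph n).symm.symm _ _ h.1, by rw [Sym2.eq_swap]; exact h.2⟩⟩
  loopless := ⟨fun x h => (cubeGraph n).loopless.irrefl x h.1⟩

/-- The product Bernoulli(p) measure on edge-indicator configurations: each potential
edge appears independently with probability `p`. -/
def cubeMeasure (n : ℕ) (p : ℝ) : Measure (Sym2 (Fin n → Bool) → Bool) :=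
  Measure.pi fun _ => (PMF.bernoulli (min (Real.toNNReal p) 1) (min_le_right _ _)).toMeasure

/-- Degree of a vertex. -/
def deg {V : Type*} [Fintype V] (G : SimpleGraph V) (v : V) : ℕ := (G.neighborSet v).ncard

/-- Maximum degree. -/
def maxDeg {V : Type*} [Fintype V] (G : SimpleGraph V) : ℕ := ⨆ v, deg G v

/-- Adjacency matrix over ℝ. -/
def adjMat {V : Type*} [Fintype V] (G : SimpleGraph V) : Matrix V V ℝ :=
  @SimpleGraph.adjMatrix ℝ V G (Classical.decRel _) _ _

theorem adjMat_isHermitian {V : Type*} [Fintype V] (G : SimpleGraph V) :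
    (adjMat G).IsHermitian := by
  apply Matrix.ext
  intro i j
  simp only [adjMat, Matrix.conjTranspose_apply, SimpleGraph.adjMatrix_apply, star_trivial]
  by_cases h : G.Adj i j
  · rw [if_pos h, if_pos (G.symm.symm _ _ h)]
  · rw [if_neg h, if_neg (fun hji => h (G.symm.symm _ _ hji))]

/-- The largest eigenvalue of the adjacency matrix of `G`. -/
def lambda1 {V : Type*} [Fintype V] [DecidableEq V] (G : SimpleGraph V) : ℝ :=
  ⨆ v, (adjMat_isHermitian G).eigenvalues v

/-- `κ(n) = max { k : 2^n C(n,k) p^k (1-p)^{n-k} ≥ 1 }`. -/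
def kappa (n : ℕ) (p : ℝ) : ℕ :=
  sSup {k : ℕ | 1 ≤ (2 : ℝ) ^ n * n.choose k * p ^ k * (1 - p) ^ (n - k)}

open Matrix in
/-- a bipartite graph with `m` edges has `λ1(G) ≤ √m`. -/
theorem lambda1_bipartite_le_sqrt_edges {V : Type*} [Fintype V] [DecidableEq V]
    (G : SimpleGraph V) (hbip : G.Colorable 2) :
    lambda1 G ≤ Real.sqrt (G.edgeSet.ncard : ℝ) := by
  classical
  have hm0 : (0:ℝ) ≤ Real.sqrt (G.edgeSet.ncard : ℝ) := Real.sqrt_nonneg _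
  have key : ∀ i, (adjMat_isHermitian G).eigenvalues i ≤ Real.sqrt (G.edgeSet.ncard : ℝ) := by
    intro i
    set hA := adjMat_isHermitian G
    set x : V → ℝ := ⇑(hA.eigenvectorBasis i) with hxdef
    have hev : adjMat G *ᵥ x = hA.eigenvalues i • x := hA.mulVec_eigenvectorBasis i
    -- norm 1
    have hnorm : ∑ u, x u ^ 2 = 1 := by
      have h1 : ‖hA.eigenvectorBasis i‖ = 1 := (hA.eigenvectorBasis.orthonormal).1 i
      have hthis := EuclideanSpace.norm_eq (hA.eigenvectorBasis i)
      rw [h1] at hthis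
      have h2 : Real.sqrt (∑ u, x u ^ 2) = 1 := by
        rw [hthis]
        congr 1
        exact Finset.sum_congr rfl fun u _ => by rw [Real.norm_eq_abs, sq_abs]
      have h3 : (0:ℝ) ≤ ∑ u, x u ^ 2 := Finset.sum_nonneg fun u _ => sq_nonneg _
      nlinarith [Real.sq_sqrt h3, h2]
    obtain ⟨C⟩ := hbip
    set f : V → ℝ := fun u => x u ^ 2 with hfdef
    have hf0 : ∀ u, 0 ≤ f u := fun u => sq_nonneg _
    set P : Finset (V × V) := Finset.univ.filter fun p => G.Adj p.1 p.2 with hP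
    set S : ℝ := ∑ p ∈ P, x p.1 * x p.2 with hS
    -- eigenvalue equals S
    have hlam : hA.eigenvalues i = S := by
      have hdot : x ⬝ᵥ (adjMat G *ᵥ x) = hA.eigenvalues i := by
        rw [hev, dotProduct_smul, smul_eq_mul]
        have hxx : x ⬝ᵥ x = 1 := by
          simpa [dotProduct, ← sq] using hnorm
        rw [hxx, mul_one]
      rw [← hdot]
      rw [hS, hP]
      rw [Finset.sum_filter, ← Finset.univ_product_univ, Finset.sum_product]
      simp only [dotProduct, Matrix.mulVec, dotProduct, adjMat,
        SimpleGraph.adjMatrix_apply, Finset.mul_sum]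
      refine Finset.sum_congr rfl fun u _ => Finset.sum_congr rfl fun w _ => ?_
      by_cases h : G.Adj u w <;> simp [h]
    -- color class sums
    set F0 : Finset V := Finset.univ.filter fun u => C u = 0 with hF0
    set F1 : Finset V := Finset.univ.filter fun u => C u = 1 with hF1
    set g0 : ℝ := ∑ u ∈ F0, f u with hg0
    set g1 : ℝ := ∑ u ∈ F1, f u with hg1
    have hg0nn : 0 ≤ g0 := Finset.sum_nonneg fun u _ => hf0 u
    have hg1nn : 0 ≤ g1 := Finset.sum_nonneg fun u _ => hf0 u
    have hg01 : g0 + g1 = 1 := by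
      have hnot : F1 = Finset.univ.filter fun u => ¬ C u = 0 := by
        rw [hF1]
        apply Finset.filter_congr
        intro u _
        constructor
        · intro h; rw [h]; decide
        · intro h; revert h; generalize C u = c; revert c; decide
      rw [hg0, hg1, hF0, hnot, Finset.sum_filter_add_sum_filter_not, ← hnorm]
    -- splitting the differently-colored pairs
    have hiff : ∀ a b : Fin 2, a ≠ b ↔ (a = 0 ∧ b = 1) ∨ (a = 1 ∧ b = 0) := by decide
    have hsplit : (Finset.univ.filter fun p : V × V => C p.1 ≠ C p.2)
        = F0 ×ˢ F1 ∪ F1 ×ˢ F0 := by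
      ext p
      simp only [Finset.mem_filter, Finset.mem_union, Finset.mem_product, hF0, hF1,
        Finset.mem_univ, true_and, hiff]
    have hdisj : Disjoint (F0 ×ˢ F1) (F1 ×ˢ F0) := by
      rw [Finset.disjoint_left]
      rintro ⟨a, b⟩ h1 h2
      simp only [Finset.mem_product, hF0, hF1, Finset.mem_filter, Finset.mem_univ,
        true_and] at h1 h2
      exact absurd (h1.1.symm.trans h2.1) (by decide)
    have hQ : ∑ p ∈ Finset.univ.filter (fun p : V × V => C p.1 ≠ C p.2), f p.1 * f p.2
        = 2 * (g0 * g1) := by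
      rw [hsplit, Finset.sum_union hdisj, Finset.sum_product, Finset.sum_product,
        ← Finset.sum_mul_sum, ← Finset.sum_mul_sum, ← hg0, ← hg1]
      ring
    -- sum of squares over edges bounded
    have hsq : ∑ p ∈ P, (x p.1 * x p.2) ^ 2 ≤ 2 * (g0 * g1) := by
      rw [← hQ]
      have hrw : ∀ p : V × V, (x p.1 * x p.2) ^ 2 = f p.1 * f p.2 := fun p => by
        rw [hfdef]; ring
      calc ∑ p ∈ P, (x p.1 * x p.2) ^ 2 = ∑ p ∈ P, f p.1 * f p.2 :=
            Finset.sum_congr rfl fun p _ => hrw p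
        _ ≤ ∑ p ∈ Finset.univ.filter (fun p : V × V => C p.1 ≠ C p.2), f p.1 * f p.2 := by
            apply Finset.sum_le_sum_of_subset_of_nonneg
            · intro p hp
              simp only [hP, Finset.mem_filter, Finset.mem_univ, true_and] at hp ⊢
              exact C.valid hp
            · intro p _ _
              exact mul_nonneg (hf0 _) (hf0 _)
    -- Cauchy-Schwarz
    have hCS : S ^ 2 ≤ (P.card : ℝ) * ∑ p ∈ P, (x p.1 * x p.2) ^ 2 := by
      have h := Finset.sum_mul_sq_le_sq_mul_sq P (fun _ => (1:ℝ)) (fun p => x p.1 * x p.2)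
      simpa [Finset.sum_const, nsmul_eq_mul] using h
    -- edge count
    have hcard : (P.card : ℝ) = 2 * (G.edgeSet.ncard : ℝ) := by
      have h2 : 2 * G.edgeFinset.card = P.card := by
        rw [SimpleGraph.two_mul_card_edgeFinset, hP]
      have hn : G.edgeSet.ncard = G.edgeFinset.card := by
        rw [SimpleGraph.edgeFinset, Set.ncard_eq_toFinset_card']
      rw [hn, ← h2]
      push_cast
      ring
    have hmnn : (0:ℝ) ≤ (G.edgeSet.ncard : ℝ) := Nat.cast_nonneg _
    have hS2 : S ^ 2 ≤ (G.edgeSet.ncard : ℝ) := by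
      have hgg : 2 * (g0 * g1) ≤ 1 / 2 := by nlinarith [sq_nonneg (g0 - g1)]
      nlinarith [mul_le_mul_of_nonneg_left hsq (by linarith : (0:ℝ) ≤ (P.card : ℝ))]
    rw [hlam]
    calc S ≤ |S| := le_abs_self S
      _ = Real.sqrt (S ^ 2) := (Real.sqrt_sq_eq_abs S).symm
      _ ≤ Real.sqrt (G.edgeSet.ncard : ℝ) := Real.sqrt_le_sqrt hS2
  rcases isEmpty_or_nonempty V with h | h
  · unfold lambda1
    rw [Real.iSup_of_isEmpty]
    exact hm0
  · exact ciSup_le key
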